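/- Let A be a unital C*-algebra and H a selfadjoint element of A. Then H² + 1 is invertible, the map s ↦ (H² + (s²+1)·1)⁻¹ is Bochner integrable on (0,∞), and (2/π) ∫₀^∞ (H² + (s²+1)·1)⁻¹ ds = (H²+1)^{−1/2}, where (H²+1)^{−1/2} denotes the continuous functional calculus of H applied to x ↦ (x²+1)^{−1/2}. -/

import Mathlib

open MeasureTheory Set

open Real in
lemma aux_integral_sq_add_sq {a : ℝ} (ha : 0 < a) :
    ∫ s in Ioi (0 : ℝ), (s ^ 2 + a ^ 2)⁻¹ = π / (2 * a) := by
  have h := MeasureTheory.integral_comp_mul_left_Ioi (fun t => (1 + t ^ 2)⁻¹) 0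
    (inv_pos.mpr ha)
  simp only [mul_zero, integral_Ioi_inv_one_add_sq, arctan_zero, sub_zero, inv_inv] at h
  have heq : ∀ x : ℝ, (1 + (a⁻¹ * x) ^ 2)⁻¹ = a ^ 2 * (x ^ 2 + a ^ 2)⁻¹ := by
    intro x
    rw [show 1 + (a⁻¹ * x) ^ 2 = (x ^ 2 + a ^ 2) / a ^ 2 by field_simp; ring,
      inv_div, div_eq_mul_inv]
  simp_rw [heq, integral_const_mul] at h
  rw [smul_eq_mul] at h
  have ha2 : (a : ℝ) ^ 2 ≠ 0 := by positivity
  have hπ : (0:ℝ) < π := pi_pos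
  field_simp at h ⊢
  nlinarith [h]

open Real in
lemma aux_pointwise (x : ℝ) :
    ∫ s in Ioi (0 : ℝ), (x ^ 2 + (s ^ 2 + 1))⁻¹ =
      (π / 2) * (x ^ 2 + 1) ^ (-(1 / 2) : ℝ) := by
  have hx : (0 : ℝ) < x ^ 2 + 1 := by positivity
  have ha : 0 < Real.sqrt (x ^ 2 + 1) := Real.sqrt_pos.mpr hx
  have h1 : ∀ s : ℝ, x ^ 2 + (s ^ 2 + 1) = s ^ 2 + Real.sqrt (x ^ 2 + 1) ^ 2 := by
    intro s
    rw [Real.sq_sqrt hx.le]; ring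
  simp_rw [h1]
  rw [aux_integral_sq_add_sq ha, Real.rpow_neg hx.le, ← Real.sqrt_eq_rpow]
  rw [← div_div, div_eq_mul_inv]

/-- Let `A` be a unital C*-algebra and `H` a selfadjoint element of `A`. Then `H² + 1` is
invertible, the map `s ↦ (H² + (s²+1)·1)⁻¹` is Bochner integrable on `(0,∞)`, and
`(2/π) ∫₀^∞ (H² + (s²+1)·1)⁻¹ ds = (H²+1)^{−1/2}`, the latter being the continuous
functional calculus of `H` applied to `x ↦ (x²+1)^{−1/2}`. -/
theorem inv_sqrt_sq_add_one_eq_two_div_pi_integral_resolvent {A : Type*} [CStarAlgebra A]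
    (H : A) (hH : IsSelfAdjoint H) :
    IsUnit (H ^ 2 + 1) ∧
    IntegrableOn (fun s : ℝ => Ring.inverse (H ^ 2 + (s ^ 2 + 1) • (1 : A))) (Ioi 0) volume ∧
    (2 / Real.pi) • ∫ s in Ioi (0 : ℝ), Ring.inverse (H ^ 2 + (s ^ 2 + 1) • (1 : A)) =
      cfc (fun x : ℝ => (x ^ 2 + 1) ^ (-(1 / 2) : ℝ)) H := by
  -- Step A : express `H ^ 2 + c • 1` via cfc
  have hA : ∀ c : ℝ, H ^ 2 + c • (1 : A) = cfc (fun x : ℝ => x ^ 2 + c) H := by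
    intro c
    have h1 : cfc (fun x : ℝ => x ^ 2 + c) H
        = cfc (fun x : ℝ => x ^ 2) H + cfc (fun _ : ℝ => c) H :=
      cfc_add (a := H) (fun x : ℝ => x ^ 2) (fun _ => c)
        ((continuous_id.pow 2).continuousOn) continuousOn_const
    rw [h1, cfc_pow_id (R := ℝ) H 2 hH, cfc_const c H hH, Algebra.algebraMap_eq_smul_one]
  -- positivity of the relevant functions on the spectrum
  have hne : ∀ s : ℝ, ∀ x ∈ spectrum ℝ H, x ^ 2 + (s ^ 2 + 1) ≠ 0 := by
    intro s x _; positivity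
  have hcont1 : ∀ s : ℝ, ContinuousOn (fun x : ℝ => (x ^ 2 + (s ^ 2 + 1))⁻¹)
      (spectrum ℝ H) := fun s =>
    (((continuous_id.pow 2).add continuous_const).continuousOn).inv₀ (hne s)
  -- Step B : the inverse via cfc
  have hB : ∀ s : ℝ, Ring.inverse (H ^ 2 + (s ^ 2 + 1) • (1 : A)) =
      cfc (fun x : ℝ => (x ^ 2 + (s ^ 2 + 1))⁻¹) H := by
    intro s
    rw [hA (s ^ 2 + 1),
      ← cfc_inv (fun x : ℝ => x ^ 2 + (s ^ 2 + 1)) H (hne s)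
        (((continuous_id.pow 2).add continuous_const).continuousOn) hH]
  -- continuity of the two-variable function
  have hcont : Continuous
      (fun p : ℝ × (spectrum ℝ H) => ((p.2 : ℝ) ^ 2 + (p.1 ^ 2 + 1))⁻¹) :=
    Continuous.inv₀ (by fun_prop) fun p => by positivity
  -- the continuous-map-valued function
  let F : C(ℝ × (spectrum ℝ H), ℝ) := ⟨_, hcont⟩
  let fc : ℝ → C(spectrum ℝ H, ℝ) := fun s => ContinuousMap.curry F s
  have hfc_cont : Continuous fc := (ContinuousMap.curry F).continuous
  -- the bound
  have hbound_int : Integrable (fun s : ℝ => (1 + s ^ 2)⁻¹)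
      (volume.restrict (Ioi 0)) := integrable_inv_one_add_sq.restrict
  have hfc_norm : ∀ s : ℝ, ‖fc s‖ ≤ (1 + s ^ 2)⁻¹ := by
    intro s
    refine (ContinuousMap.norm_le _ (by positivity)).mpr fun z => ?_
    have hz : (0 : ℝ) < (z : ℝ) ^ 2 + (s ^ 2 + 1) := by positivity
    have hle : ((z : ℝ) ^ 2 + (s ^ 2 + 1))⁻¹ ≤ (1 + s ^ 2)⁻¹ := by
      apply inv_anti₀ (by positivity)
      nlinarith [sq_nonneg (z : ℝ)]
    simpa [fc, F, Real.norm_eq_abs, abs_inv, abs_of_pos hz] using hle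
  have hfc_int : Integrable fc (volume.restrict (Ioi 0)) := by
    refine Integrable.mono' hbound_int hfc_cont.aestronglyMeasurable ?_
    exact Filter.Eventually.of_forall hfc_norm
  -- each cfc equals cfcL applied to fc
  have hcfcL : ∀ s : ℝ, cfc (fun x : ℝ => (x ^ 2 + (s ^ 2 + 1))⁻¹) H =
      cfcL (R := ℝ) hH (fc s) := by
    intro s
    rw [cfc_eq_cfcL hH (hcont1 s)]
    exact congrArg _ (ContinuousMap.ext fun z => rfl)
  -- integrability
  have hint : IntegrableOn (fun s : ℝ => Ring.inverse (H ^ 2 + (s ^ 2 + 1) • (1 : A)))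
      (Ioi 0) volume := by
    have hI := (cfcL (R := ℝ) hH).integrable_comp hfc_int
    refine hI.congr (Filter.Eventually.of_forall fun s => ?_)
    show cfcL (R := ℝ) hH (fc s) = _
    rw [← hcfcL s, ← hB s]
  refine ⟨?_, hint, ?_⟩
  · -- IsUnit (H ^ 2 + 1)
    have h1 : H ^ 2 + 1 = cfc (fun x : ℝ => x ^ 2 + 1) H := by
      simpa using hA 1
    rw [h1]
    exact isUnit_cfc _ H (fun x _ => by positivity)
      (hf := ((continuous_id.pow 2).add continuous_const).continuousOn) (ha := hH)
  · -- the integral identity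
    have hswap : cfc (fun r : ℝ => ∫ s in Ioi (0 : ℝ), (r ^ 2 + (s ^ 2 + 1))⁻¹) H =
        ∫ s in Ioi (0 : ℝ), cfc (fun x : ℝ => (x ^ 2 + (s ^ 2 + 1))⁻¹) H := by
      refine cfc_integral (fun s x => (x ^ 2 + (s ^ 2 + 1))⁻¹) (fun s => (1 + s ^ 2)⁻¹) H
        ?_ ?_ hbound_int.hasFiniteIntegral hH
      · exact (Continuous.inv₀ (f := fun p : ℝ × ℝ => p.2 ^ 2 + (p.1 ^ 2 + 1)) (by fun_prop)
          fun p => by positivity).continuousOn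
      · refine Filter.Eventually.of_forall fun s z hz => ?_
        have hzpos : (0 : ℝ) < z ^ 2 + (s ^ 2 + 1) := by positivity
        have hle : (z ^ 2 + (s ^ 2 + 1))⁻¹ ≤ (1 + s ^ 2)⁻¹ := by
          apply inv_anti₀ (by positivity)
          nlinarith [sq_nonneg z]
        rw [Real.norm_eq_abs, abs_of_pos (inv_pos.mpr hzpos)]
        exact hle
    have hinteq : (∫ s in Ioi (0 : ℝ), Ring.inverse (H ^ 2 + (s ^ 2 + 1) • (1 : A))) =
        cfc (fun r : ℝ => ∫ s in Ioi (0 : ℝ), (r ^ 2 + (s ^ 2 + 1))⁻¹) H := by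
      rw [hswap]
      exact integral_congr_ae (Filter.Eventually.of_forall fun s => hB s)
    rw [hinteq]
    have hfun : (fun r : ℝ => ∫ s in Ioi (0 : ℝ), (r ^ 2 + (s ^ 2 + 1))⁻¹) =
        fun r : ℝ => (Real.pi / 2) * (r ^ 2 + 1) ^ (-(1 / 2) : ℝ) := by
      funext r; exact aux_pointwise r
    have hrpow_cont : Continuous (fun x : ℝ => (x ^ 2 + 1) ^ (-(1 / 2) : ℝ)) :=
      ((continuous_id.pow 2).add continuous_const).rpow_const
        (fun x => Or.inl (by show x ^ 2 + 1 ≠ 0; positivity))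
    rw [hfun, cfc_const_mul (Real.pi / 2) (fun x : ℝ => (x ^ 2 + 1) ^ (-(1 / 2) : ℝ)) H
      hrpow_cont.continuousOn, smul_smul,
      show (2 / Real.pi) * (Real.pi / 2) = 1 by field_simp, one_smul]
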